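/- Let B ∈ ℝ^{r×r} be symmetric positive semidefinite, let D ∈ ℝ^{n×n} be diagonal with diagonal entries d_1,…,d_n, and let Z be the membership matrix of a partition of {1,…,n} into r clusters each of size n/r. Then λ_r(D Z B Zᵀ D) ≥ (n/r)·λ_min(B)·min_{1≤i≤n} d_i². -/

import Mathlib

open Matrix


lemma quad_decomp {m : ℕ} {A : Matrix (Fin m) (Fin m) ℝ} (hA : A.IsHermitian) (x : Fin m → ℝ) :
    x ⬝ᵥ A *ᵥ x
      = ∑ i, hA.eigenvalues i * ((hA.eigenvectorUnitary : Matrix (Fin m) (Fin m) ℝ)ᵀ *ᵥ x) i ^ 2 := by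
  set K : Matrix (Fin m) (Fin m) ℝ := (hA.eigenvectorUnitary : Matrix (Fin m) (Fin m) ℝ) with hK
  have hstar : star K = Kᵀ := conjTranspose_eq_transpose_of_trivial K
  have hspec : A = K * diagonal hA.eigenvalues * Kᵀ := by
    have := hA.spectral_theorem
    rw [← hstar, hK]
    simpa using this
  conv_lhs => rw [hspec]
  rw [← mulVec_mulVec, ← mulVec_mulVec, dotProduct_mulVec, ← mulVec_transpose]
  set w := Kᵀ *ᵥ x with hw
  simp [dotProduct, mulVec_diagonal]
  refine Finset.sum_congr rfl fun i _ => by ring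

lemma quad_norm {m : ℕ} {A : Matrix (Fin m) (Fin m) ℝ} (hA : A.IsHermitian) (x : Fin m → ℝ) :
    x ⬝ᵥ x = ∑ i, ((hA.eigenvectorUnitary : Matrix (Fin m) (Fin m) ℝ)ᵀ *ᵥ x) i ^ 2 := by
  set K : Matrix (Fin m) (Fin m) ℝ := (hA.eigenvectorUnitary : Matrix (Fin m) (Fin m) ℝ) with hK
  have hstar : star K = Kᵀ := conjTranspose_eq_transpose_of_trivial K
  have h1 : K * Kᵀ = 1 := by
    rw [← hstar]
    exact (Matrix.mem_unitaryGroup_iff).mp hA.eigenvectorUnitary.2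
  have : x ⬝ᵥ x = x ⬝ᵥ (K * Kᵀ) *ᵥ x := by rw [h1, one_mulVec]
  rw [this, ← mulVec_mulVec, dotProduct_mulVec, ← mulVec_transpose]
  simp [dotProduct, sq]

lemma rayleigh_low {m : ℕ} {A : Matrix (Fin m) (Fin m) ℝ} (hA : A.IsHermitian) (x : Fin m → ℝ) :
    (⨅ k, hA.eigenvalues k) * (x ⬝ᵥ x) ≤ x ⬝ᵥ A *ᵥ x := by
  rw [quad_decomp hA x, quad_norm hA x, Finset.mul_sum]
  refine Finset.sum_le_sum fun i _ => mul_le_mul_of_nonneg_right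
    (ciInf_le (Set.Finite.bddBelow (Set.finite_range _)) i) (sq_nonneg _)

/-- The eigenvalues of a Hermitian matrix, listed in nonincreasing order:
`eigDesc hM i` is the `(i+1)`-th largest eigenvalue of `M`. -/
noncomputable def eigDesc {n : ℕ} {M : Matrix (Fin n) (Fin n) ℝ} (hM : M.IsHermitian)
    (i : Fin n) : ℝ :=
  hM.eigenvalues (Tuple.sort hM.eigenvalues i.rev)

/-- if `B` is a symmetric positive semidefinite `r × r` matrix, `D` is an
`n × n` diagonal matrix with diagonal entries `d_1, …, d_n`, and `Z` is the membership matrix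
of a partition of `{1,…,n}` into `r` clusters each of size `n/r`, then
`λ_r (D Z B Zᵀ D) ≥ (n/r) · λ_min(B) · min_i d_i²`. -/
theorem stmt_3 (n r : ℕ) (hr : 0 < r) (hrn : r ≤ n) (hdvd : r ∣ n)
    (z : Fin n → Fin r)
    (hsize : ∀ k : Fin r, (Finset.univ.filter fun i => z i = k).card = n / r)
    (Z : Matrix (Fin n) (Fin r) ℝ)
    (hZ : Z = Matrix.of (fun i k => if z i = k then (1 : ℝ) else 0))
    (B : Matrix (Fin r) (Fin r) ℝ) (hB : B.PosSemidef)
    (d : Fin n → ℝ)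
    (M : Matrix (Fin n) (Fin n) ℝ)
    (hM : M = Matrix.diagonal d * Z * B * Zᵀ * Matrix.diagonal d)
    (hHerm : M.IsHermitian) :
    (n : ℝ) / r * (⨅ k, hB.1.eigenvalues k) * (⨅ i, (d i) ^ 2) ≤
      eigDesc hHerm ⟨r - 1, by omega⟩ := by
  have hn : 0 < n := lt_of_lt_of_le hr hrn
  haveI : Nonempty (Fin r) := ⟨⟨0, hr⟩⟩
  haveI : Nonempty (Fin n) := ⟨⟨0, hn⟩⟩
  have hq : 0 < n / r := Nat.div_pos hrn hr
  set lB := ⨅ k, hB.1.eigenvalues k with hlB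
  set md := ⨅ i, (d i) ^ 2 with hmd
  set c : ℝ := (n : ℝ) / r * lB * md with hc
  -- M is PSD
  have hMps : M.PosSemidef := by
    have : M = (Matrix.diagonal d * Z) * B * (Matrix.diagonal d * Z)ᴴ := by
      rw [hM, conjTranspose_mul, conjTranspose_eq_transpose_of_trivial,
        conjTranspose_eq_transpose_of_trivial, diagonal_transpose]
      exact Matrix.mul_assoc _ _ _
    rw [this]
    exact hB.mul_mul_conjTranspose_same _
  have hEigNN : ∀ i, 0 ≤ hHerm.eigenvalues i := fun i => hMps.eigenvalues_nonneg i
  -- eigDesc is an eigenvalue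
  have hdesc : eigDesc hHerm ⟨r - 1, by omega⟩
      = hHerm.eigenvalues (Tuple.sort hHerm.eigenvalues (Fin.rev ⟨r - 1, by omega⟩)) := rfl
  rcases le_or_gt c 0 with hcneg | hcpos
  · exact le_trans hcneg (hdesc ▸ hEigNN _)
  -- positive case
  have hlBnn : 0 ≤ lB := le_ciInf fun k => hB.eigenvalues_nonneg k
  have hmdnn : 0 ≤ md := le_ciInf fun i => sq_nonneg _
  have hmdle : ∀ i, md ≤ d i ^ 2 := fun i => ciInf_le (Set.Finite.bddBelow (Set.finite_range _)) i
  have hmdpos : 0 < md := by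
    rcases hmdnn.lt_or_eq with h | h
    · exact h
    · exfalso; rw [hc, ← h, mul_zero] at hcpos; exact lt_irrefl _ hcpos
  have hlBpos : 0 < lB := by
    by_contra h
    push_neg at h
    have : lB = 0 := le_antisymm h hlBnn
    rw [hc, this, mul_zero, zero_mul] at hcpos
    exact lt_irrefl _ hcpos
  have hd0 : ∀ i, d i ≠ 0 := by
    intro i h
    have := hmdle i
    rw [h] at this
    simp at this
    exact absurd (lt_of_lt_of_le hmdpos this) (by norm_num)
  by_contra hcon
  push_neg at hcon
  rw [hdesc] at hcon
  set σ := Tuple.sort hHerm.eigenvalues with hσ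
  set g : Fin n → ℝ := hHerm.eigenvalues ∘ σ with hg
  have hmono : Monotone g := Tuple.monotone_sort hHerm.eigenvalues
  have hrev : (Fin.rev (⟨r - 1, by omega⟩ : Fin n)) = ⟨n - r, by omega⟩ := by
    ext; simp [Fin.rev]; omega
  have hgcon : g ⟨n - r, by omega⟩ < c := by rw [hg]; simpa [hrev] using hcon
  -- the set of large eigenvalues is small
  set S : Finset (Fin n) := Finset.univ.filter (fun i => c ≤ hHerm.eigenvalues i) with hS
  have hScard : S.card < r := by
    set T : Finset (Fin n) := Finset.univ.filter (fun j => c ≤ g j) with hT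
    have hST : S = T.image σ := by
      ext i
      simp only [hS, hT, Finset.mem_filter, Finset.mem_univ, true_and, Finset.mem_image]
      constructor
      · intro h
        exact ⟨σ.symm i, by simpa [hg] using h, by simp⟩
      · rintro ⟨j, hj, rfl⟩
        simpa [hg] using hj
    have hcards : S.card = T.card := by
      rw [hST, Finset.card_image_of_injective _ σ.injective]
    have hsub : T ⊆ Finset.Ioi (⟨n - r, by omega⟩ : Fin n) := by
      intro j hj
      simp only [hT, Finset.mem_filter, Finset.mem_univ, true_and] at hj
      simp only [Finset.mem_Ioi]
      by_contra h
      push_neg at h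
      exact absurd hj (not_le.mpr (lt_of_le_of_lt (hmono h) hgcon))
    have := Finset.card_le_card hsub
    rw [Fin.card_Ioi] at this
    simp only [Fin.val_mk] at this
    omega
  -- linear maps
  set φ : (Fin n → ℝ) →ₗ[ℝ] ({ i // i ∈ S } → ℝ) :=
    LinearMap.pi (fun i : { i // i ∈ S } => (LinearMap.proj (i : Fin n)).comp
      ((hHerm.eigenvectorUnitary : Matrix (Fin n) (Fin n) ℝ)ᵀ).mulVecLin) with hφ
  have hWrank : (n : ℕ) - S.card ≤ Module.finrank ℝ (LinearMap.ker φ) := by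
    have h1 := LinearMap.finrank_range_add_finrank_ker φ
    have h2 : Module.finrank ℝ (LinearMap.range φ) ≤ S.card := by
      calc Module.finrank ℝ (LinearMap.range φ)
          ≤ Module.finrank ℝ ({ i // i ∈ S } → ℝ) := Submodule.finrank_le _
        _ = S.card := by simp [Module.finrank_pi]
    have h3 : Module.finrank ℝ (Fin n → ℝ) = n := by simp
    omega
  set L : (Fin r → ℝ) →ₗ[ℝ] (Fin n → ℝ) :=
    (Matrix.diagonal (fun i => (d i)⁻¹)).mulVecLin.comp (LinearMap.funLeft ℝ ℝ z) with hL
  have hLapply : ∀ (v : Fin r → ℝ) i, L v i = (d i)⁻¹ * v (z i) := by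
    intro v i
    simp [hL, mulVec_diagonal, LinearMap.funLeft]
  have hLker : ∀ v, L v = 0 → v = 0 := by
    intro v hv
    funext k
    obtain ⟨i, hi⟩ : ∃ i, z i = k := by
      have hcard := hsize k
      have hpos : 0 < (Finset.univ.filter fun i => z i = k).card := by omega
      obtain ⟨i, hi⟩ := Finset.card_pos.mp hpos
      exact ⟨i, (Finset.mem_filter.mp hi).2⟩
    have h := congrFun hv i
    rw [hLapply] at h
    simp only [Pi.zero_apply] at h
    rcases mul_eq_zero.mp h with h | h
    · exact absurd h (inv_ne_zero (hd0 i))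
    · rw [← hi]; exact h
  have hLinj : Function.Injective L := by
    rw [← LinearMap.ker_eq_bot]
    exact LinearMap.ker_eq_bot'.mpr hLker
  have hVrank : Module.finrank ℝ (LinearMap.range L) = r := by
    rw [LinearMap.finrank_range_of_inj hLinj]
    simp
  have hsum := Submodule.finrank_sup_add_finrank_inf_eq (LinearMap.range L) (LinearMap.ker φ)
  have hle : Module.finrank ℝ ↥(LinearMap.range L ⊔ LinearMap.ker φ) ≤ n :=
    le_trans (Submodule.finrank_le _) (by simp)
  have hinf : 0 < Module.finrank ℝ ↥(LinearMap.range L ⊓ LinearMap.ker φ) := by omega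
  haveI : Nontrivial ↥(LinearMap.range L ⊓ LinearMap.ker φ) := Module.finrank_pos_iff.mp hinf
  obtain ⟨y, hy⟩ := exists_ne (0 : ↥(LinearMap.range L ⊓ LinearMap.ker φ))
  have hx0 : (y : Fin n → ℝ) ≠ 0 := fun h => hy (Subtype.ext h)
  set x : Fin n → ℝ := (y : Fin n → ℝ) with hx
  have hxV : x ∈ LinearMap.range L := y.2.1
  have hxW : x ∈ LinearMap.ker φ := y.2.2
  -- x in ker: coordinates on S vanish
  have hwS : ∀ i (hi : i ∈ S),
      (((hHerm.eigenvectorUnitary : Matrix (Fin n) (Fin n) ℝ))ᵀ *ᵥ x) i = 0 := by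
    intro i hi
    have h := congrFun (LinearMap.mem_ker.mp hxW) ⟨i, hi⟩
    rw [mulVec_transpose]
    simpa [hφ, mulVec_transpose] using h
  -- strict upper bound
  have hupper : x ⬝ᵥ M *ᵥ x < c * (x ⬝ᵥ x) := by
    rw [quad_decomp hHerm x, quad_norm hHerm x, Finset.mul_sum]
    have hwne : ((hHerm.eigenvectorUnitary : Matrix (Fin n) (Fin n) ℝ))ᵀ *ᵥ x ≠ 0 := by
      intro h
      apply hx0
      have := quad_norm hHerm x
      rw [h] at this
      simpa using this
    obtain ⟨i0, hi0⟩ := Function.ne_iff.mp hwne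
    have hi0S : i0 ∉ S := fun h => hi0 (by simpa using hwS i0 h)
    have hi0lt : hHerm.eigenvalues i0 < c := by
      by_contra h
      exact hi0S (by simp [hS]; exact not_lt.mp h)
    refine Finset.sum_lt_sum (fun i _ => ?_) ⟨i0, Finset.mem_univ i0, ?_⟩
    · by_cases hiS : i ∈ S
      · rw [hwS i hiS]
        simp
      · have : hHerm.eigenvalues i < c := by
          by_contra h
          exact hiS (by simp [hS]; exact not_lt.mp h)
        exact mul_le_mul_of_nonneg_right this.le (sq_nonneg _)
    · have hi0' : (((hHerm.eigenvectorUnitary : Matrix (Fin n) (Fin n) ℝ))ᵀ *ᵥ x) i0 ≠ 0 := hi0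
      have hsq : 0 < (((hHerm.eigenvectorUnitary : Matrix (Fin n) (Fin n) ℝ))ᵀ *ᵥ x) i0 ^ 2 :=
        lt_of_le_of_ne (sq_nonneg _) (Ne.symm (pow_ne_zero 2 hi0'))
      exact mul_lt_mul_of_pos_right hi0lt hsq
  -- lower bound via membership in range of L
  obtain ⟨v, hv⟩ := hxV
  have hcast : ((n / r : ℕ) : ℝ) = (n : ℝ) / r :=
    Nat.cast_div hdvd (Nat.cast_ne_zero.mpr hr.ne')
  have hrR : (0:ℝ) < (n : ℝ) / r := by
    rw [← hcast]
    exact_mod_cast hq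
  have hDx : Matrix.diagonal d *ᵥ x = fun i => v (z i) := by
    funext i
    rw [← hv]
    simp only [mulVec_diagonal, hLapply]
    rw [← mul_assoc, mul_inv_cancel₀ (hd0 i), one_mul]
  have hZty : Zᵀ *ᵥ (fun i => v (z i)) = fun k => ((n : ℝ) / r) * v k := by
    funext k
    simp only [mulVec, dotProduct, transpose_apply, hZ, of_apply, ite_mul, one_mul, zero_mul]
    rw [← Finset.sum_filter]
    rw [Finset.sum_congr rfl (fun i hi => by rw [(Finset.mem_filter.mp hi).2])]
    rw [Finset.sum_const, hsize k, nsmul_eq_mul, hcast]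
  have hsmul : (fun k => ((n : ℝ) / r) * v k) = ((n : ℝ) / r) • v := rfl
  have hqf : x ⬝ᵥ M *ᵥ x = ((n:ℝ)/r)^2 * (v ⬝ᵥ B *ᵥ v) := by
    rw [hM, ← mulVec_mulVec, ← mulVec_mulVec, ← mulVec_mulVec, ← mulVec_mulVec]
    rw [hDx, hZty, hsmul, mulVec_smul, mulVec_smul, mulVec_smul, dotProduct_smul,
      smul_eq_mul]
    rw [dotProduct_mulVec x (Matrix.diagonal d)]
    have hxD : x ᵥ* Matrix.diagonal d = Matrix.diagonal d *ᵥ x := by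
      funext i
      simp [vecMul_diagonal, mulVec_diagonal, mul_comm]
    rw [hxD, hDx, dotProduct_mulVec, ← mulVec_transpose, hZty, hsmul, smul_dotProduct,
      smul_eq_mul]
    ring
  have hBrayleigh : lB * (v ⬝ᵥ v) ≤ v ⬝ᵥ B *ᵥ v := rayleigh_low hB.1 v
  have hnorm : x ⬝ᵥ x ≤ md⁻¹ * (((n:ℝ)/r) * (v ⬝ᵥ v)) := by
    have h1 : x ⬝ᵥ x = ∑ i, ((d i)⁻¹)^2 * (v (z i))^2 := by
      simp only [dotProduct, ← hv, hLapply]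
      exact Finset.sum_congr rfl fun i _ => by ring
    have h3 : ∑ i, (v (z i))^2 = ((n:ℝ)/r) * (v ⬝ᵥ v) := by
      have := Finset.sum_fiberwise Finset.univ z (fun i => (v (z i))^2)
      rw [← this]
      rw [Finset.sum_congr rfl (fun k _ => Finset.sum_congr rfl
        (fun i (hi : i ∈ Finset.univ.filter fun i => z i = k) => by
          rw [(Finset.mem_filter.mp hi).2]))]
      simp only [Finset.sum_const, hsize, nsmul_eq_mul, hcast]
      rw [← Finset.mul_sum]
      congr 1
      simp [dotProduct, sq]
    calc x ⬝ᵥ x = ∑ i, ((d i)⁻¹)^2 * (v (z i))^2 := h1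
      _ ≤ ∑ i, md⁻¹ * (v (z i))^2 := by
          refine Finset.sum_le_sum fun i _ => mul_le_mul_of_nonneg_right ?_ (sq_nonneg _)
          rw [inv_pow]
          exact inv_anti₀ hmdpos (hmdle i)
      _ = md⁻¹ * (((n:ℝ)/r) * (v ⬝ᵥ v)) := by rw [← Finset.mul_sum, h3]
  have hlow : c * (x ⬝ᵥ x) ≤ x ⬝ᵥ M *ᵥ x := by
    calc c * (x ⬝ᵥ x) ≤ c * (md⁻¹ * (((n:ℝ)/r) * (v ⬝ᵥ v))) :=
          mul_le_mul_of_nonneg_left hnorm hcpos.le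
      _ = ((n:ℝ)/r)^2 * (lB * (v ⬝ᵥ v)) := by
          rw [hc]
          field_simp
      _ ≤ ((n:ℝ)/r)^2 * (v ⬝ᵥ B *ᵥ v) := by
          apply mul_le_mul_of_nonneg_left hBrayleigh (by positivity)
      _ = x ⬝ᵥ M *ᵥ x := hqf.symm
  exact absurd hlow (not_le.mpr hupper)
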